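/- Applying a downward long braid move (replacing consecutive (i+1, i, i+1) by (i, i+1, i)) to a reduced decomposition of w ∈ S_n decreases the number of (2,1,2)-subnetworks by exactly 1. -/

import Mathlib

/-- The adjacent transposition `s_i` of `S_n` (1-based: swaps positions `i` and `i+1`). -/
def adjT (n : ℕ) (i : ℕ) : Equiv.Perm (Fin n) :=
  if h : 1 ≤ i ∧ i < n then Equiv.swap ⟨i - 1, by omega⟩ ⟨i, h.2⟩ else 1

/-- The number of inversions of a permutation of `Fin n`. -/
def invCount (n : ℕ) (w : Equiv.Perm (Fin n)) : ℕ :=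
  (Finset.univ.filter fun p : Fin n × Fin n => p.1 < p.2 ∧ w p.2 < w p.1).card

/-- `ρ` is a reduced decomposition of `w`: a word of length `inv(w)` in the letters
`1, …, n-1` whose product of adjacent transpositions is `w`. -/
def IsReducedDecomp (n : ℕ) (w : Equiv.Perm (Fin n)) (ρ : List ℕ) : Prop :=
  (∀ r ∈ ρ, 1 ≤ r ∧ r < n) ∧ (ρ.map (adjT n)).prod = w ∧ ρ.length = invCount n w

/-- A short braid move: swapping two adjacent letters differing by at least 2. -/
def ShortBraidMove (ρ ρ' : List ℕ) : Prop :=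
  ∃ l r : List ℕ, ∃ a b : ℕ, (a + 2 ≤ b ∨ b + 2 ≤ a) ∧
    ρ = l ++ [a, b] ++ r ∧ ρ' = l ++ [b, a] ++ r

/-- Two words are in the same commutation class iff related by short braid moves. -/
def CommEquiv : List ℕ → List ℕ → Prop := Relation.ReflTransGen ShortBraidMove

/-- A long braid move: `(i+1, i, i+1) ↔ (i, i+1, i)` on a consecutive substring. -/
def LongBraidMove (ρ ρ' : List ℕ) : Prop :=
  ∃ l r : List ℕ, ∃ i : ℕ,
    (ρ = l ++ [i + 1, i, i + 1] ++ r ∧ ρ' = l ++ [i, i + 1, i] ++ r) ∨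
    (ρ = l ++ [i, i + 1, i] ++ r ∧ ρ' = l ++ [i + 1, i, i + 1] ++ r)

/-- The number of commutation classes of reduced decompositions of `w`. -/
noncomputable def numCommClasses (n : ℕ) (w : Equiv.Perm (Fin n)) : ℕ :=
  Nat.card (Quot fun a b : {ρ : List ℕ // IsReducedDecomp n w ρ} => CommEquiv a.1 b.1)

/-- The arrangement (position ↦ value) after the first `k` steps of the word `ρ`. -/
def prefixPerm (n : ℕ) (ρ : List ℕ) (k : ℕ) : Equiv.Perm (Fin n) :=
  ((ρ.take k).map (adjT n)).prod

/-- The word induced by `ρ` on a set `A` of values: record, in order, each step of `ρ`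
swapping two values of `A`, labeled (1-based) by the relative position of the swapped
pair among the values of `A`. -/
def inducedWord (n : ℕ) (ρ : List ℕ) (A : Finset (Fin n)) : List ℕ :=
  (List.range ρ.length).filterMap fun k =>
    let u := prefixPerm n ρ k
    let i := ρ.getD k 0
    if h : 1 ≤ i ∧ i < n then
      if u ⟨i - 1, by omega⟩ ∈ A ∧ u ⟨i, h.2⟩ ∈ A then
        some ((A.filter fun x => (u.symm x : ℕ) < i - 1).card + 1)
      else none
    else none

/-- The number of `(2,1,2)`-subnetworks of `ρ`. -/
def count212 (n : ℕ) (ρ : List ℕ) : ℕ :=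
  (Finset.univ.filter fun A : Finset (Fin n) =>
    A.card = 3 ∧ inducedWord n ρ A = [2, 1, 2]).card

/-- The number of 321-patterns of `w`. -/
def N321 (n : ℕ) (w : Equiv.Perm (Fin n)) : ℕ :=
  (Finset.univ.filter fun t : Fin n × Fin n × Fin n =>
    t.1 < t.2.1 ∧ t.2.1 < t.2.2 ∧ w t.2.2 < w t.2.1 ∧ w t.2.1 < w t.1).card

namespace Braid212
variable {n : ℕ}

lemma adjT_eq (i : ℕ) (h1 : 1 ≤ i) (h2 : i < n) :
    adjT n i = Equiv.swap ⟨i - 1, by omega⟩ ⟨i, h2⟩ := by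
  unfold adjT; rw [dif_pos ⟨h1, h2⟩]

lemma prefixPerm_zero (ρ : List ℕ) : prefixPerm n ρ 0 = 1 := rfl

lemma prefixPerm_succ (ρ : List ℕ) (k : ℕ) (hk : k < ρ.length) :
    prefixPerm n ρ (k+1) = prefixPerm n ρ k * adjT n (ρ.getD k 0) := by
  unfold prefixPerm
  rw [List.take_succ, List.map_append, List.prod_append, List.getD_eq_getElem _ _ hk]
  simp [List.getElem?_eq_getElem hk]

lemma prefixPerm_append_le (l t : List ℕ) (k : ℕ) (hk : k ≤ l.length) :
    prefixPerm n (l ++ t) k = prefixPerm n l k := by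
  unfold prefixPerm
  rw [List.take_append, Nat.sub_eq_zero_of_le hk]
  simp

lemma prefixPerm_append_ge (l t : List ℕ) (k : ℕ) (hk : l.length ≤ k) :
    prefixPerm n (l ++ t) k = (l.map (adjT n)).prod * prefixPerm n t (k - l.length) := by
  unfold prefixPerm
  rw [List.take_append, List.take_of_length_le hk, List.map_append, List.prod_append]

def G (n : ℕ) (A : Finset (Fin n)) (u : Equiv.Perm (Fin n)) (i : ℕ) : Option ℕ :=
  if h : 1 ≤ i ∧ i < n then
    if u ⟨i - 1, by omega⟩ ∈ A ∧ u ⟨i, h.2⟩ ∈ A then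
      some ((A.filter fun x => (u.symm x : ℕ) < i - 1).card + 1)
    else none
  else none

lemma inducedWord_eq (ρ : List ℕ) (A : Finset (Fin n)) :
    inducedWord n ρ A = (List.range ρ.length).filterMap
      (fun k => G n A (prefixPerm n ρ k) (ρ.getD k 0)) := rfl

lemma G_valid (A : Finset (Fin n)) (u : Equiv.Perm (Fin n)) {i : ℕ} (h1 : 1 ≤ i) (h2 : i < n) :
    G n A u i = if u ⟨i - 1, by omega⟩ ∈ A ∧ u ⟨i, h2⟩ ∈ A then
      some ((A.filter fun x => (u.symm x : ℕ) < i - 1).card + 1) else none := by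
  unfold G; rw [dif_pos ⟨h1, h2⟩]

lemma mul_symm_apply (u σ : Equiv.Perm (Fin n)) (x : Fin n) :
    (u * σ).symm x = σ.symm (u.symm x) := by
  simp [Equiv.Perm.mul_def, Equiv.symm_trans_apply]



def posN (n : ℕ) (ρ : List ℕ) (k : ℕ) (x : Fin n) : ℕ := ((prefixPerm n ρ k).symm x : ℕ)

def crossAt (n : ℕ) (ρ : List ℕ) (k : ℕ) (x y : Fin n) : Prop :=
  (posN n ρ k x = ρ.getD k 0 - 1 ∧ posN n ρ k y = ρ.getD k 0) ∨
  (posN n ρ k y = ρ.getD k 0 - 1 ∧ posN n ρ k x = ρ.getD k 0)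

instance (ρ : List ℕ) (k : ℕ) (x y : Fin n) : Decidable (crossAt n ρ k x y) := by
  unfold crossAt; infer_instance

lemma crossAt_symm {ρ : List ℕ} {k : ℕ} {x y : Fin n} (h : crossAt n ρ k x y) :
    crossAt n ρ k y x := h.symm

lemma posN_succ (ρ : List ℕ) (k : ℕ) (hk : k < ρ.length)
    (hv : 1 ≤ ρ.getD k 0 ∧ ρ.getD k 0 < n) (x : Fin n) :
    posN n ρ (k+1) x = if posN n ρ k x = ρ.getD k 0 - 1 then ρ.getD k 0
      else if posN n ρ k x = ρ.getD k 0 then ρ.getD k 0 - 1 else posN n ρ k x := by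
  unfold posN
  rw [prefixPerm_succ ρ k hk, adjT_eq _ hv.1 hv.2, mul_symm_apply, Equiv.symm_swap,
    Equiv.swap_apply_def]
  split_ifs <;> (simp only [Fin.ext_iff, Fin.val_mk] at *) <;> omega

lemma posN_inj (ρ : List ℕ) (k : ℕ) {x y : Fin n} (hxy : x ≠ y) :
    posN n ρ k x ≠ posN n ρ k y := fun hc =>
  hxy ((prefixPerm n ρ k).symm.injective (Fin.ext hc))

lemma getD_valid {ρ : List ℕ} (hval : ∀ s ∈ ρ, 1 ≤ s ∧ s < n) {k : ℕ} (hk : k < ρ.length) :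
    1 ≤ ρ.getD k 0 ∧ ρ.getD k 0 < n := by
  rw [List.getD_eq_getElem _ _ hk]
  exact hval _ (List.getElem_mem hk)

lemma order_pres (ρ : List ℕ) (hval : ∀ s ∈ ρ, 1 ≤ s ∧ s < n) (x y : Fin n) (hxy : x ≠ y)
    (m : ℕ) (hm : m ≤ ρ.length) (hnc : ∀ k < m, ¬ crossAt n ρ k x y) :
    (posN n ρ m x < posN n ρ m y ↔ (x : ℕ) < y) := by
  induction m with
  | zero => simp [posN, prefixPerm, Equiv.Perm.one_symm]
  | succ k ih =>
    have hk : k < ρ.length := by omega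
    have hv := getD_valid hval hk
    have hinj := posN_inj ρ k hxy
    have hnk := hnc k (by omega)
    unfold crossAt at hnk
    rw [not_or, not_and_or, not_and_or] at hnk
    rw [posN_succ ρ k hk hv, posN_succ ρ k hk hv,
      ← ih (by omega) (fun k' hk' => hnc k' (by omega))]
    have h1 := hv.1
    split_ifs <;> omega


def pairsF (n : ℕ) : Finset (Fin n × Fin n) := Finset.univ.filter fun p => p.1 < p.2

lemma crossAt_step_unique (ρ : List ℕ) (hval : ∀ s ∈ ρ, 1 ≤ s ∧ s < n)
    (k : ℕ) (hk : k < ρ.length) :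
    ((pairsF n).filter fun p => crossAt n ρ k p.1 p.2).card = 1 := by
  have hv := getD_valid hval hk
  set j := ρ.getD k 0 with hj
  set u := prefixPerm n ρ k with hu
  set x : Fin n := u ⟨j - 1, by omega⟩ with hx
  set y : Fin n := u ⟨j, hv.2⟩ with hy
  have hpx : posN n ρ k x = j - 1 := by
    unfold posN; rw [hx, ← hu, Equiv.symm_apply_apply]
  have hpy : posN n ρ k y = j := by
    unfold posN; rw [hy, ← hu, Equiv.symm_apply_apply]
  have hxy : x ≠ y := by
    intro hc
    have := hpx.symm.trans (by rw [hc, hpy])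
    omega
  have keyx : ∀ z : Fin n, posN n ρ k z = j - 1 → z = x := by
    intro z hz
    exact (prefixPerm n ρ k).symm.injective (Fin.ext (hz.trans hpx.symm))
  have keyy : ∀ z : Fin n, posN n ρ k z = j → z = y := by
    intro z hz
    exact (prefixPerm n ρ k).symm.injective (Fin.ext (hz.trans hpy.symm))
  rw [Finset.card_eq_one]
  refine ⟨if x < y then (x, y) else (y, x), ?_⟩
  ext p
  obtain ⟨p1, p2⟩ := p
  simp only [Finset.mem_filter, Finset.mem_singleton, pairsF, Finset.mem_univ, true_and]
  constructor
  · rintro ⟨hlt, hc⟩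
    rcases hc with ⟨h1, h2⟩ | ⟨h1, h2⟩
    · have e1 := keyx _ h1; have e2 := keyy _ h2
      subst e1; subst e2
      rw [if_pos hlt]
    · have e1 := keyy _ h2; have e2 := keyx _ h1
      subst e1; subst e2
      rw [if_neg (not_lt_of_gt hlt)]
  · intro hp
    by_cases hlt : x < y
    · rw [if_pos hlt] at hp
      rw [Prod.mk.injEq] at hp
      obtain ⟨rfl, rfl⟩ := hp
      exact ⟨hlt, Or.inl ⟨hpx, hpy⟩⟩
    · rw [if_neg hlt] at hp
      rw [Prod.mk.injEq] at hp
      obtain ⟨rfl, rfl⟩ := hp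
      exact ⟨lt_of_le_of_ne (not_lt.mp hlt) (Ne.symm hxy), Or.inr ⟨hpx, hpy⟩⟩

lemma sum_cross (ρ : List ℕ) (hval : ∀ s ∈ ρ, 1 ≤ s ∧ s < n) :
    ∑ p ∈ pairsF n,
      ((Finset.range ρ.length).filter fun k => crossAt n ρ k p.1 p.2).card = ρ.length := by
  have h1 : ∀ p ∈ pairsF n,
      ((Finset.range ρ.length).filter fun k => crossAt n ρ k p.1 p.2).card
        = ∑ k ∈ Finset.range ρ.length, if crossAt n ρ k p.1 p.2 then 1 else 0 := by
    intro p _; rw [Finset.card_filter]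
  rw [Finset.sum_congr rfl h1, Finset.sum_comm]
  have h2 : ∀ k ∈ Finset.range ρ.length,
      (∑ p ∈ pairsF n, if crossAt n ρ k p.1 p.2 then 1 else 0) = 1 := by
    intro k hk
    rw [← Finset.card_filter]
    exact crossAt_step_unique ρ hval k (Finset.mem_range.mp hk)
  rw [Finset.sum_congr rfl h2, Finset.sum_const, Finset.card_range, smul_eq_mul, mul_one]

lemma invCount_pairs (w : Equiv.Perm (Fin n)) :
    invCount n w = ∑ p ∈ pairsF n, if w.symm p.2 < w.symm p.1 then 1 else 0 := by
  rw [← Finset.card_filter]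
  unfold invCount pairsF
  rw [Finset.filter_filter]
  apply Finset.card_bij' (fun p _ => ((w p.2 : Fin n), (w p.1 : Fin n)))
    (fun p _ => ((w.symm p.2 : Fin n), (w.symm p.1 : Fin n)))
  · intro p hp
    simp only [Finset.mem_filter, Finset.mem_univ, true_and] at hp ⊢
    simpa using ⟨hp.2, hp.1⟩
  · intro p hp
    simp only [Finset.mem_filter, Finset.mem_univ, true_and] at hp ⊢
    simpa using ⟨hp.2, hp.1⟩
  · intro p hp; simp
  · intro p hp; simp

lemma cross_card {w : Equiv.Perm (Fin n)} {ρ : List ℕ} (hred : IsReducedDecomp n w ρ) :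
    ∀ p ∈ pairsF n,
      ((Finset.range ρ.length).filter fun k => crossAt n ρ k p.1 p.2).card
        = if w.symm p.2 < w.symm p.1 then 1 else 0 := by
  obtain ⟨hval, hprod, hlen⟩ := hred
  have hle : ∀ p ∈ pairsF n,
      (if w.symm p.2 < w.symm p.1 then 1 else 0)
        ≤ ((Finset.range ρ.length).filter fun k => crossAt n ρ k p.1 p.2).card := by
    intro p hp
    split_ifs with hinv
    · rw [Nat.one_le_iff_ne_zero, Ne, Finset.card_eq_zero, ← Ne,
        ← Finset.nonempty_iff_ne_empty]
      by_contra hne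
      rw [Finset.not_nonempty_iff_eq_empty, Finset.filter_eq_empty_iff] at hne
      have hplt : p.1 < p.2 := by
        simpa [pairsF] using hp
      have hop := order_pres ρ hval p.1 p.2 (ne_of_lt hplt) ρ.length le_rfl
        (fun k hk => hne (Finset.mem_range.mpr hk))
      have hfin : prefixPerm n ρ ρ.length = w := by
        unfold prefixPerm; rw [List.take_length]; exact hprod
      unfold posN at hop
      rw [hfin] at hop
      have : (w.symm p.1 : ℕ) < (w.symm p.2 : ℕ) := hop.mpr hplt
      exact absurd hinv (by rw [not_lt]; exact le_of_lt (by exact this))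
    · exact Nat.zero_le _
  have hsum : (∑ p ∈ pairsF n, if w.symm p.2 < w.symm p.1 then 1 else 0)
      = ∑ p ∈ pairsF n,
        ((Finset.range ρ.length).filter fun k => crossAt n ρ k p.1 p.2).card := by
    rw [← invCount_pairs, sum_cross ρ hval, hlen]
  exact fun p hp => ((Finset.sum_eq_sum_iff_of_le hle).mp hsum p hp).symm

lemma cross_unique {w : Equiv.Perm (Fin n)} {ρ : List ℕ} (hred : IsReducedDecomp n w ρ)
    {x y : Fin n} {k1 k2 : ℕ} (h1 : k1 < ρ.length) (h2 : k2 < ρ.length) (hne : k1 ≠ k2)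
    (c1 : crossAt n ρ k1 x y) (c2 : crossAt n ρ k2 x y) : False := by
  have hval := hred.1
  have hv := getD_valid hval h1
  have hxy : x ≠ y := by
    intro hc; subst hc
    rcases c1 with ⟨ha, hb⟩ | ⟨ha, hb⟩ <;> omega
  have main : ∀ a b : Fin n, a < b → crossAt n ρ k1 a b → crossAt n ρ k2 a b → False := by
    intro a b hab d1 d2
    have hp : (a, b) ∈ pairsF n := by simp [pairsF, hab]
    have hcard := cross_card ⟨hval, hred.2.1, hred.2.2⟩ (a, b) hp
    have hsub : ({k1, k2} : Finset ℕ)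
        ⊆ (Finset.range ρ.length).filter fun k => crossAt n ρ k a b := by
      intro k hk
      simp only [Finset.mem_insert, Finset.mem_singleton] at hk
      rcases hk with rfl | rfl <;>
        simp only [Finset.mem_filter, Finset.mem_range] <;> exact ⟨by omega, by assumption⟩
    have hc2 : ({k1, k2} : Finset ℕ).card = 2 := Finset.card_pair hne
    have := Finset.card_le_card hsub
    rw [hcard] at this
    split_ifs at this <;> omega
  rcases lt_or_gt_of_ne hxy with hlt | hlt
  · exact main x y hlt c1 c2
  · exact main y x hlt (crossAt_symm c1) (crossAt_symm c2)

lemma swap_val_lt {t : ℕ} (a b p : Fin n) (ha : ¬ (a : ℕ) < t) (hb : ¬ (b : ℕ) < t) :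
    ((Equiv.swap a b p : Fin n) : ℕ) < t ↔ (p : ℕ) < t := by
  rw [Equiv.swap_apply_def]
  split_ifs with h1 h2
  · subst h1; exact iff_of_false hb ha
  · subst h2; exact iff_of_false ha hb
  · exact Iff.rfl

lemma filter_comp_card (v σ : Equiv.Perm (Fin n)) (A : Finset (Fin n)) (t : ℕ)
    (hσ : ∀ p : Fin n, ((σ.symm p : Fin n) : ℕ) < t ↔ (p : ℕ) < t) :
    (A.filter fun x => (((v * σ).symm x : Fin n) : ℕ) < t).card
      = (A.filter fun x => ((v.symm x : Fin n) : ℕ) < t).card := by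
  congr 1
  apply Finset.filter_congr
  intro x _
  rw [mul_symm_apply]
  exact hσ _

lemma filter_card_lt (v : Equiv.Perm (Fin n)) (A : Finset (Fin n)) {i : ℕ}
    (h1 : 1 ≤ i) (h2 : i < n) :
    (A.filter fun x => ((v.symm x : Fin n) : ℕ) < i).card
      = (A.filter fun x => ((v.symm x : Fin n) : ℕ) < i - 1).card
        + (if v ⟨i - 1, by omega⟩ ∈ A then 1 else 0) := by
  split_ifs with hm
  · have hins : A.filter (fun x => ((v.symm x : Fin n) : ℕ) < i)
        = insert (v ⟨i - 1, by omega⟩)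
            (A.filter fun x => ((v.symm x : Fin n) : ℕ) < i - 1) := by
      ext z
      simp only [Finset.mem_filter, Finset.mem_insert]
      constructor
      · rintro ⟨hz, hlt⟩
        by_cases hzeq : ((v.symm z : Fin n) : ℕ) = i - 1
        · left
          have hve : v.symm z = ⟨i - 1, by omega⟩ := Fin.ext hzeq
          rw [← hve, Equiv.apply_symm_apply]
        · right; exact ⟨hz, by omega⟩
      · rintro (rfl | ⟨hz, hlt⟩)
        · refine ⟨hm, ?_⟩
          rw [Equiv.symm_apply_apply]
          exact (by omega : i - 1 < i)
        · exact ⟨hz, by omega⟩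
    rw [hins, Finset.card_insert_of_notMem (by
      simp only [Finset.mem_filter, Equiv.symm_apply_apply, not_and]
      intro _
      exact (by omega : ¬ i - 1 < i - 1))]
  · rw [Nat.add_zero]
    congr 1
    apply Finset.filter_congr
    intro z hz
    constructor
    · intro hlt
      by_cases hzeq : ((v.symm z : Fin n) : ℕ) = i - 1
      · exfalso
        apply hm
        have hve : v.symm z = ⟨i - 1, by omega⟩ := Fin.ext hzeq
        rw [← hve, Equiv.apply_symm_apply]
        exact hz
      · omega
    · omega

lemma adjT_braid {i : ℕ} (h1 : 1 ≤ i) (h2 : i + 1 < n) :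
    adjT n (i+1) * adjT n i * adjT n (i+1) = adjT n i * adjT n (i+1) * adjT n i := by
  obtain ⟨e0, e1, e2, he0, he1, he2⟩ :
      ∃ e0 e1 e2 : Fin n, (e0 : ℕ) = i - 1 ∧ (e1 : ℕ) = i ∧ (e2 : ℕ) = i + 1 :=
    ⟨⟨i - 1, by omega⟩, ⟨i, by omega⟩, ⟨i + 1, by omega⟩, rfl, rfl, rfl⟩
  have h01 : e0 ≠ e1 := fun hc => by rw [Fin.ext_iff, he0, he1] at hc; omega
  have h02 : e0 ≠ e2 := fun hc => by rw [Fin.ext_iff, he0, he2] at hc; omega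
  have h12 : e1 ≠ e2 := fun hc => by rw [Fin.ext_iff, he1, he2] at hc; omega
  have hs0 : adjT n i = Equiv.swap e0 e1 := by
    rw [adjT_eq i h1 (by omega)]
    congr 1 <;> exact (Fin.ext (by simp [he0, he1])).symm
  have hs1 : adjT n (i+1) = Equiv.swap e1 e2 := by
    rw [adjT_eq (i+1) (by omega) h2]
    congr 1 <;> exact (Fin.ext (by simp [he1, he2])).symm
  rw [hs0, hs1]
  rw [Equiv.swap_mul_swap_mul_swap h01 h02]
  rw [show Equiv.swap e0 e1 = Equiv.swap e1 e0 from Equiv.swap_comm _ _,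
    show Equiv.swap e1 e2 = Equiv.swap e2 e1 from Equiv.swap_comm _ _,
    Equiv.swap_mul_swap_mul_swap h12.symm (Ne.symm h02)]
  exact Equiv.swap_comm _ _

section Seg
variable {i : ℕ} (hi1 : 1 ≤ i) (hin : i + 1 < n)

lemma G_valid1 (A : Finset (Fin n)) (u : Equiv.Perm (Fin n)) :
    G n A u (i+1) = if u ⟨i, by omega⟩ ∈ A ∧ u ⟨i+1, hin⟩ ∈ A then
      some ((A.filter fun x => (u.symm x : ℕ) < i).card + 1) else none := by
  rw [G_valid A u (by omega) hin]; rfl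

include hi1 hin

lemma S0a : adjT n i ⟨i - 1, by omega⟩ = ⟨i, by omega⟩ := by
  rw [adjT_eq i hi1 (by omega)]; exact Equiv.swap_apply_left _ _

lemma S0b : adjT n i ⟨i, by omega⟩ = ⟨i - 1, by omega⟩ := by
  rw [adjT_eq i hi1 (by omega)]; exact Equiv.swap_apply_right _ _

lemma S0c : adjT n i ⟨i + 1, hin⟩ = ⟨i + 1, hin⟩ := by
  rw [adjT_eq i hi1 (by omega)]
  exact Equiv.swap_apply_of_ne_of_ne (by simp only [ne_eq, Fin.mk.injEq]; omega) (by simp only [ne_eq, Fin.mk.injEq]; omega)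

lemma S1a : adjT n (i+1) ⟨i - 1, by omega⟩ = ⟨i - 1, by omega⟩ := by
  rw [adjT_eq (i+1) (by omega) hin]
  exact Equiv.swap_apply_of_ne_of_ne (by simp only [ne_eq, Fin.mk.injEq]; omega) (by simp only [ne_eq, Fin.mk.injEq]; omega)

lemma S1b : adjT n (i+1) ⟨i, by omega⟩ = ⟨i + 1, hin⟩ := by
  rw [adjT_eq (i+1) (by omega) hin]
  have : (⟨i + 1 - 1, by omega⟩ : Fin n) = ⟨i, by omega⟩ := rfl
  rw [this]; exact Equiv.swap_apply_left _ _

lemma S1c : adjT n (i+1) ⟨i + 1, hin⟩ = ⟨i, by omega⟩ := by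
  rw [adjT_eq (i+1) (by omega) hin]
  have : (⟨i + 1 - 1, by omega⟩ : Fin n) = ⟨i, by omega⟩ := rfl
  rw [this]; exact Equiv.swap_apply_right _ _

lemma hs0lt : ∀ p : Fin n, (((adjT n i).symm p : Fin n) : ℕ) < i - 1 ↔ (p : ℕ) < i - 1 := by
  intro p
  rw [adjT_eq i hi1 (by omega), Equiv.symm_swap]
  exact swap_val_lt _ _ p ((by omega : ¬ i - 1 < i - 1)) ((by omega : ¬ i < i - 1))

lemma hs1lt : ∀ p : Fin n, (((adjT n (i+1)).symm p : Fin n) : ℕ) < i - 1 ↔ (p : ℕ) < i - 1 := by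
  intro p
  rw [adjT_eq (i+1) (by omega) hin, Equiv.symm_swap]
  exact swap_val_lt _ _ p ((by omega : ¬ i < i - 1)) ((by omega : ¬ i + 1 < i - 1))

variable (v : Equiv.Perm (Fin n)) (A : Finset (Fin n))

lemma g0r : G n A v (i+1) =
    if v ⟨i, by omega⟩ ∈ A ∧ v ⟨i+1, hin⟩ ∈ A then
      some ((A.filter fun x => ((v.symm x : Fin n) : ℕ) < i - 1).card
        + (if v ⟨i - 1, by omega⟩ ∈ A then 1 else 0) + 1) else none := by
  rw [G_valid1 hin A v, filter_card_lt v A hi1 (by omega)]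

lemma g1r : G n A (v * adjT n (i+1)) i =
    if v ⟨i - 1, by omega⟩ ∈ A ∧ v ⟨i+1, hin⟩ ∈ A then
      some ((A.filter fun x => ((v.symm x : Fin n) : ℕ) < i - 1).card + 1) else none := by
  rw [G_valid A _ hi1 (by omega)]
  simp only [Equiv.Perm.mul_apply, S1a hi1 hin, S1b hi1 hin, S1c hi1 hin]
  rw [filter_comp_card v (adjT n (i+1)) A (i-1) (hs1lt hi1 hin)]

lemma g2r : G n A (v * adjT n (i+1) * adjT n i) (i+1) =
    if v ⟨i - 1, by omega⟩ ∈ A ∧ v ⟨i, by omega⟩ ∈ A then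
      some ((A.filter fun x => ((v.symm x : Fin n) : ℕ) < i - 1).card
        + (if v ⟨i+1, hin⟩ ∈ A then 1 else 0) + 1) else none := by
  rw [G_valid1 hin A _, filter_card_lt (v * adjT n (i+1) * adjT n i) A hi1 (by omega)]
  simp only [Equiv.Perm.mul_apply, S0a hi1 hin, S0b hi1 hin, S0c hi1 hin,
    S1a hi1 hin, S1b hi1 hin, S1c hi1 hin]
  rw [filter_comp_card (v * adjT n (i+1)) (adjT n i) A (i-1) (hs0lt hi1 hin),
    filter_comp_card v (adjT n (i+1)) A (i-1) (hs1lt hi1 hin)]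

lemma g0s : G n A v i =
    if v ⟨i - 1, by omega⟩ ∈ A ∧ v ⟨i, by omega⟩ ∈ A then
      some ((A.filter fun x => ((v.symm x : Fin n) : ℕ) < i - 1).card + 1) else none := by
  rw [G_valid A v hi1 (by omega)]

lemma g1s : G n A (v * adjT n i) (i+1) =
    if v ⟨i - 1, by omega⟩ ∈ A ∧ v ⟨i+1, hin⟩ ∈ A then
      some ((A.filter fun x => ((v.symm x : Fin n) : ℕ) < i - 1).card
        + (if v ⟨i, by omega⟩ ∈ A then 1 else 0) + 1) else none := by
  rw [G_valid1 hin A _, filter_card_lt (v * adjT n i) A hi1 (by omega)]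
  simp only [Equiv.Perm.mul_apply, S0a hi1 hin, S0b hi1 hin, S0c hi1 hin]
  rw [filter_comp_card v (adjT n i) A (i-1) (hs0lt hi1 hin)]

lemma g2s : G n A (v * adjT n i * adjT n (i+1)) i =
    if v ⟨i, by omega⟩ ∈ A ∧ v ⟨i+1, hin⟩ ∈ A then
      some ((A.filter fun x => ((v.symm x : Fin n) : ℕ) < i - 1).card + 1) else none := by
  rw [G_valid A _ hi1 (by omega)]
  simp only [Equiv.Perm.mul_apply, S0a hi1 hin, S0b hi1 hin, S0c hi1 hin,
    S1a hi1 hin, S1b hi1 hin, S1c hi1 hin]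
  rw [filter_comp_card (v * adjT n i) (adjT n (i+1)) A (i-1) (hs1lt hi1 hin),
    filter_comp_card v (adjT n i) A (i-1) (hs0lt hi1 hin)]

end Seg

lemma iw_split (l m3 r : List ℕ) (hm : m3.length = 3) (A : Finset (Fin n)) :
    inducedWord n (l ++ m3 ++ r) A =
      ((List.range l.length).filterMap fun k =>
        G n A (prefixPerm n (l ++ m3 ++ r) k) ((l ++ m3 ++ r).getD k 0)) ++
      (((List.range 3).filterMap fun t =>
        G n A (prefixPerm n (l ++ m3 ++ r) (l.length + t))
          ((l ++ m3 ++ r).getD (l.length + t) 0)) ++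
      ((List.range r.length).filterMap fun t =>
        G n A (prefixPerm n (l ++ m3 ++ r) (l.length + (3 + t)))
          ((l ++ m3 ++ r).getD (l.length + (3 + t)) 0))) := by
  rw [inducedWord_eq]
  have hlen : (l ++ m3 ++ r).length = l.length + (3 + r.length) := by
    simp only [List.length_append, hm]; omega
  rw [hlen, List.range_add, List.range_add, List.map_append, List.map_map,
    List.filterMap_append, List.filterMap_append, List.filterMap_map, List.filterMap_map]
  rfl

lemma range3 : List.range 3 = [0, 1, 2] := rfl

lemma filterMap_range3 (f : ℕ → Option ℕ) :
    (List.range 3).filterMap f = (f 0).toList ++ ((f 1).toList ++ (f 2).toList) := by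
  rw [range3]
  cases h0 : f 0 <;> cases h1 : f 1 <;> cases h2 : f 2 <;>
    simp [List.filterMap_cons, h0, h1, h2]

section Ctx
variable (l r : List ℕ)

lemma ML1 (m3 : List ℕ) (k : ℕ) (hk : k ≤ l.length) :
    prefixPerm n (l ++ m3 ++ r) k = prefixPerm n l k := by
  rw [List.append_assoc, prefixPerm_append_le _ _ _ hk]

lemma ML2 (m3 : List ℕ) (k : ℕ) (hk : k < l.length) :
    (l ++ m3 ++ r).getD k 0 = l.getD k 0 := by
  rw [List.append_assoc, List.getD_append _ _ _ _ hk]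

lemma MM1 (m3 : List ℕ) (t : ℕ) :
    prefixPerm n (l ++ m3 ++ r) (l.length + t)
      = (l.map (adjT n)).prod * prefixPerm n (m3 ++ r) t := by
  rw [List.append_assoc, prefixPerm_append_ge _ _ _ (Nat.le_add_right _ _),
    Nat.add_sub_cancel_left]

lemma MM2 (m3 : List ℕ) (t : ℕ) :
    (l ++ m3 ++ r).getD (l.length + t) 0 = (m3 ++ r).getD t 0 := by
  rw [List.append_assoc, List.getD_append_right _ _ _ _ (Nat.le_add_right _ _),
    Nat.add_sub_cancel_left]

lemma midP0 (m3 : List ℕ) :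
    prefixPerm n (l ++ m3 ++ r) l.length = (l.map (adjT n)).prod := by
  have := MM1 (n := n) l r m3 0
  rw [Nat.add_zero] at this
  rw [this]
  simp [prefixPerm]

lemma midP1 (x y z : ℕ) :
    prefixPerm n (l ++ [x, y, z] ++ r) (l.length + 1)
      = (l.map (adjT n)).prod * adjT n x := by
  rw [MM1]
  congr 1

lemma midP2 (x y z : ℕ) :
    prefixPerm n (l ++ [x, y, z] ++ r) (l.length + 2)
      = (l.map (adjT n)).prod * adjT n x * adjT n y := by
  rw [MM1, mul_assoc]
  congr 1

lemma midD0 (x y z : ℕ) : (l ++ [x, y, z] ++ r).getD l.length 0 = x := by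
  have := MM2 l r [x, y, z] 0
  rw [Nat.add_zero] at this
  rw [this]; rfl

lemma midD1 (x y z : ℕ) : (l ++ [x, y, z] ++ r).getD (l.length + 1) 0 = y := by
  rw [MM2]; rfl

lemma midD2 (x y z : ℕ) : (l ++ [x, y, z] ++ r).getD (l.length + 2) 0 = z := by
  rw [MM2]; rfl

lemma rightP (x y z : ℕ) (t : ℕ) :
    prefixPerm n (l ++ [x, y, z] ++ r) (l.length + (3 + t))
      = (l.map (adjT n)).prod
        * ((adjT n x * (adjT n y * (adjT n z * 1))) * prefixPerm n r t) := by
  rw [MM1]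
  congr 1
  rw [show ([x, y, z] : List ℕ) ++ r = [x, y, z] ++ r from rfl,
    prefixPerm_append_ge _ _ _ (by simp : ([x,y,z] : List ℕ).length ≤ 3 + t)]
  congr 1
  congr 1
  simp only [List.length_cons, List.length_nil]
  omega

lemma rightD (x y z : ℕ) (t : ℕ) :
    (l ++ [x, y, z] ++ r).getD (l.length + (3 + t)) 0 = r.getD t 0 := by
  rw [MM2, List.getD_append_right _ _ _ _ (by simp : ([x,y,z] : List ℕ).length ≤ 3 + t)]
  congr 1
  simp only [List.length_cons, List.length_nil]
  omega

end Ctx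

lemma adjT_symm {j : ℕ} (h1 : 1 ≤ j) (h2 : j < n) : (adjT n j).symm = adjT n j := by
  rw [adjT_eq j h1 h2]; exact Equiv.symm_swap _ _

lemma G_some_cross (ρ : List ℕ) (A : Finset (Fin n)) (k : ℕ)
    (hG : G n A (prefixPerm n ρ k) (ρ.getD k 0) ≠ none) :
    ∃ x y : Fin n, x ∈ A ∧ y ∈ A ∧ crossAt n ρ k x y := by
  unfold G at hG
  by_cases hv : 1 ≤ ρ.getD k 0 ∧ ρ.getD k 0 < n
  · rw [dif_pos hv] at hG
    by_cases hmem : prefixPerm n ρ k ⟨ρ.getD k 0 - 1, by omega⟩ ∈ A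
        ∧ prefixPerm n ρ k ⟨ρ.getD k 0, hv.2⟩ ∈ A
    · refine ⟨_, _, hmem.1, hmem.2, Or.inl ⟨?_, ?_⟩⟩ <;>
        (unfold posN; rw [Equiv.symm_apply_apply])
    · rw [if_neg hmem] at hG; exact absurd rfl hG
  · rw [dif_neg hv] at hG; exact absurd rfl hG

lemma braid_prod {i : ℕ} (hi1 : 1 ≤ i) (hin : i + 1 < n) :
    adjT n (i+1) * (adjT n i * (adjT n (i+1) * 1))
      = adjT n i * (adjT n (i+1) * (adjT n i * 1)) := by
  simp only [mul_one, ← mul_assoc]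
  exact adjT_braid hi1 hin

lemma main_iw_eq (l r : List ℕ) {i : ℕ} (hi1 : 1 ≤ i) (hin : i + 1 < n) (A : Finset (Fin n))
    (hnall : ¬((l.map (adjT n)).prod ⟨i - 1, by omega⟩ ∈ A
      ∧ (l.map (adjT n)).prod ⟨i, by omega⟩ ∈ A
      ∧ (l.map (adjT n)).prod ⟨i + 1, hin⟩ ∈ A)) :
    inducedWord n (l ++ [i+1, i, i+1] ++ r) A = inducedWord n (l ++ [i, i+1, i] ++ r) A := by
  rw [iw_split l [i+1, i, i+1] r rfl A, iw_split l [i, i+1, i] r rfl A]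
  congr 1
  · apply List.filterMap_congr
    intro k hk
    have hk' := List.mem_range.mp hk
    rw [ML1 l r _ k hk'.le, ML1 l r _ k hk'.le, ML2 l r _ k hk', ML2 l r _ k hk']
  congr 1
  · rw [filterMap_range3, filterMap_range3]
    simp only [Nat.add_zero]
    rw [midP0 l r [i+1, i, i+1], midP0 l r [i, i+1, i],
      midP1 l r (i+1) i (i+1), midP1 l r i (i+1) i,
      midP2 l r (i+1) i (i+1), midP2 l r i (i+1) i,
      midD0 l r (i+1) i (i+1), midD0 l r i (i+1) i,
      midD1 l r (i+1) i (i+1), midD1 l r i (i+1) i,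
      midD2 l r (i+1) i (i+1), midD2 l r i (i+1) i]
    rw [g2r hi1 hin _ A, g2s hi1 hin _ A, g1s hi1 hin _ A, g1r hi1 hin _ A,
      g0r hi1 hin _ A, g0s hi1 hin _ A]
    by_cases ha : (l.map (adjT n)).prod ⟨i - 1, by omega⟩ ∈ A <;>
      by_cases hb : (l.map (adjT n)).prod ⟨i, by omega⟩ ∈ A <;>
      by_cases hc : (l.map (adjT n)).prod ⟨i + 1, hin⟩ ∈ A <;>
      simp [ha, hb, hc] <;> tauto
  · apply List.filterMap_congr
    intro t ht
    rw [rightP l r (i+1) i (i+1) t, rightP l r i (i+1) i t,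
      rightD l r (i+1) i (i+1) t, rightD l r i (i+1) i t, braid_prod hi1 hin]

set_option maxHeartbeats 2000000 in
lemma main_special (w : Equiv.Perm (Fin n)) (l r : List ℕ) {i : ℕ}
    (hi1 : 1 ≤ i) (hin : i + 1 < n)
    (h : IsReducedDecomp n w (l ++ [i+1, i, i+1] ++ r)) :
    inducedWord n (l ++ [i+1, i, i+1] ++ r) ({(l.map (adjT n)).prod ⟨i - 1, by omega⟩, (l.map (adjT n)).prod ⟨i, by omega⟩, (l.map (adjT n)).prod ⟨i + 1, hin⟩} : Finset (Fin n)) = [2, 1, 2]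
    ∧ inducedWord n (l ++ [i, i+1, i] ++ r) ({(l.map (adjT n)).prod ⟨i - 1, by omega⟩, (l.map (adjT n)).prod ⟨i, by omega⟩, (l.map (adjT n)).prod ⟨i + 1, hin⟩} : Finset (Fin n)) = [1, 2, 1] := by
  obtain ⟨hval, hprod, hlen⟩ := h
  have hlenρ : ((l ++ [i+1, i, i+1] ++ r)).length = l.length + (3 + r.length) := by
    simp only [List.length_append, List.length_cons, List.length_nil]; omega
  have haA : (l.map (adjT n)).prod ⟨i - 1, by omega⟩ ∈ ({(l.map (adjT n)).prod ⟨i - 1, by omega⟩, (l.map (adjT n)).prod ⟨i, by omega⟩, (l.map (adjT n)).prod ⟨i + 1, hin⟩} : Finset (Fin n)) := by simp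
  have hbA : (l.map (adjT n)).prod ⟨i, by omega⟩ ∈ ({(l.map (adjT n)).prod ⟨i - 1, by omega⟩, (l.map (adjT n)).prod ⟨i, by omega⟩, (l.map (adjT n)).prod ⟨i + 1, hin⟩} : Finset (Fin n)) := by simp
  have hcA : (l.map (adjT n)).prod ⟨i + 1, hin⟩ ∈ ({(l.map (adjT n)).prod ⟨i - 1, by omega⟩, (l.map (adjT n)).prod ⟨i, by omega⟩, (l.map (adjT n)).prod ⟨i + 1, hin⟩} : Finset (Fin n)) := by simp
  have m0 : ((({(l.map (adjT n)).prod ⟨i - 1, by omega⟩, (l.map (adjT n)).prod ⟨i, by omega⟩, (l.map (adjT n)).prod ⟨i + 1, hin⟩} : Finset (Fin n))).filter fun x => ((((l.map (adjT n)).prod).symm x : Fin n) : ℕ) < i - 1).card = 0 := by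
    rw [Finset.card_eq_zero, Finset.filter_eq_empty_iff]
    intro x hx
    simp only [Finset.mem_insert, Finset.mem_singleton] at hx
    rcases hx with rfl | rfl | rfl
    · rw [Equiv.symm_apply_apply]; exact (by omega : ¬ i - 1 < i - 1)
    · rw [Equiv.symm_apply_apply]; exact (by omega : ¬ i < i - 1)
    · rw [Equiv.symm_apply_apply]; exact (by omega : ¬ i + 1 < i - 1)
  have hc0 : crossAt n (l ++ [i+1, i, i+1] ++ r) l.length ((l.map (adjT n)).prod ⟨i, by omega⟩) ((l.map (adjT n)).prod ⟨i + 1, hin⟩) := by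
    have e1 : posN n (l ++ [i+1, i, i+1] ++ r) l.length ((l.map (adjT n)).prod ⟨i, by omega⟩) = i := by
      unfold posN; simp only [midP0 l r _, Equiv.symm_apply_apply]
    have e2 : posN n (l ++ [i+1, i, i+1] ++ r) l.length ((l.map (adjT n)).prod ⟨i + 1, hin⟩) = i + 1 := by
      unfold posN; simp only [midP0 l r _, Equiv.symm_apply_apply]
    left
    rw [e1, e2, midD0 l r (i+1) i (i+1)]
    exact ⟨by omega, rfl⟩
  have hc1 : crossAt n (l ++ [i+1, i, i+1] ++ r) (l.length + 1)
      ((l.map (adjT n)).prod ⟨i - 1, by omega⟩) ((l.map (adjT n)).prod ⟨i + 1, hin⟩) := by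
    have e1 : posN n (l ++ [i+1, i, i+1] ++ r) (l.length + 1) ((l.map (adjT n)).prod ⟨i - 1, by omega⟩) = i - 1 := by
      unfold posN
      simp only [midP1 l r (i+1) i (i+1), mul_symm_apply, Equiv.symm_apply_apply,
        adjT_symm (by omega : 1 ≤ i + 1) hin, S1a hi1 hin]
    have e2 : posN n (l ++ [i+1, i, i+1] ++ r) (l.length + 1) ((l.map (adjT n)).prod ⟨i + 1, hin⟩) = i := by
      unfold posN
      simp only [midP1 l r (i+1) i (i+1), mul_symm_apply, Equiv.symm_apply_apply,
        adjT_symm (by omega : 1 ≤ i + 1) hin, S1c hi1 hin]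
    left
    rw [e1, e2, midD1 l r (i+1) i (i+1)]
    exact ⟨rfl, rfl⟩
  have hc2 : crossAt n (l ++ [i+1, i, i+1] ++ r) (l.length + 2)
      ((l.map (adjT n)).prod ⟨i - 1, by omega⟩) ((l.map (adjT n)).prod ⟨i, by omega⟩) := by
    have e1 : posN n (l ++ [i+1, i, i+1] ++ r) (l.length + 2) ((l.map (adjT n)).prod ⟨i - 1, by omega⟩) = i := by
      unfold posN
      simp only [midP2 l r (i+1) i (i+1), mul_symm_apply, Equiv.symm_apply_apply,
        adjT_symm (by omega : 1 ≤ i + 1) hin, adjT_symm hi1 (by omega : i < n), S1a hi1 hin, S0a hi1 hin]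
    have e2 : posN n (l ++ [i+1, i, i+1] ++ r) (l.length + 2) ((l.map (adjT n)).prod ⟨i, by omega⟩) = i + 1 := by
      unfold posN
      simp only [midP2 l r (i+1) i (i+1), mul_symm_apply, Equiv.symm_apply_apply,
        adjT_symm (by omega : 1 ≤ i + 1) hin, adjT_symm hi1 (by omega : i < n), S1b hi1 hin, S0c hi1 hin]
    left
    rw [e1, e2, midD2 l r (i+1) i (i+1)]
    exact ⟨by omega, rfl⟩
  have hout : ∀ k : ℕ, (k < l.length ∨ (l.length + 3 ≤ k ∧ k < ((l ++ [i+1, i, i+1] ++ r)).length)) →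
      G n ({(l.map (adjT n)).prod ⟨i - 1, by omega⟩, (l.map (adjT n)).prod ⟨i, by omega⟩, (l.map (adjT n)).prod ⟨i + 1, hin⟩} : Finset (Fin n)) (prefixPerm n (l ++ [i+1, i, i+1] ++ r) k) (((l ++ [i+1, i, i+1] ++ r)).getD k 0) = none := by
    intro k hk
    by_contra hG
    obtain ⟨x, y, hxA, hyA, hcr⟩ := G_some_cross _ _ k hG
    have hklen : k < ((l ++ [i+1, i, i+1] ++ r)).length := by
      rcases hk with hk | hk
      · rw [hlenρ]; omega
      · exact hk.2
    have hv := getD_valid hval hklen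
    have hne0 : k ≠ l.length := by rcases hk with hk | hk <;> omega
    have hne1 : k ≠ l.length + 1 := by rcases hk with hk | hk <;> omega
    have hne2 : k ≠ l.length + 2 := by rcases hk with hk | hk <;> omega
    have hm0 : l.length < ((l ++ [i+1, i, i+1] ++ r)).length := by rw [hlenρ]; omega
    have hm1 : l.length + 1 < ((l ++ [i+1, i, i+1] ++ r)).length := by rw [hlenρ]; omega
    have hm2 : l.length + 2 < ((l ++ [i+1, i, i+1] ++ r)).length := by rw [hlenρ]; omega
    have hredρ : IsReducedDecomp n w (l ++ [i+1, i, i+1] ++ r) := ⟨hval, hprod, hlen⟩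
    simp only [Finset.mem_insert, Finset.mem_singleton] at hxA hyA
    have hxy : x ≠ y := by
      rintro rfl
      rcases hcr with ⟨h1, h2⟩ | ⟨h1, h2⟩ <;> omega
    rcases hxA with rfl | rfl | rfl <;> rcases hyA with rfl | rfl | rfl
    · exact hxy rfl
    · exact cross_unique hredρ hklen hm2 hne2 hcr hc2
    · exact cross_unique hredρ hklen hm1 hne1 hcr hc1
    · exact cross_unique hredρ hklen hm2 hne2 hcr (crossAt_symm hc2)
    · exact hxy rfl
    · exact cross_unique hredρ hklen hm0 hne0 hcr hc0
    · exact cross_unique hredρ hklen hm1 hne1 hcr (crossAt_symm hc1)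
    · exact cross_unique hredρ hklen hm0 hne0 hcr (crossAt_symm hc0)
    · exact hxy rfl
  have hLnil : ((List.range l.length).filterMap fun k =>
      G n ({(l.map (adjT n)).prod ⟨i - 1, by omega⟩, (l.map (adjT n)).prod ⟨i, by omega⟩, (l.map (adjT n)).prod ⟨i + 1, hin⟩} : Finset (Fin n)) (prefixPerm n (l ++ [i+1, i, i+1] ++ r) k) (((l ++ [i+1, i, i+1] ++ r)).getD k 0)) = [] :=
    List.filterMap_eq_nil_iff.mpr fun k hk => hout k (Or.inl (List.mem_range.mp hk))
  have hRnil : ((List.range r.length).filterMap fun t =>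
      G n ({(l.map (adjT n)).prod ⟨i - 1, by omega⟩, (l.map (adjT n)).prod ⟨i, by omega⟩, (l.map (adjT n)).prod ⟨i + 1, hin⟩} : Finset (Fin n)) (prefixPerm n (l ++ [i+1, i, i+1] ++ r) (l.length + (3 + t)))
        (((l ++ [i+1, i, i+1] ++ r)).getD (l.length + (3 + t)) 0)) = [] :=
    List.filterMap_eq_nil_iff.mpr fun t ht => hout (l.length + (3 + t))
      (Or.inr ⟨by omega, by rw [hlenρ]; have := List.mem_range.mp ht; omega⟩)
  constructor
  · rw [iw_split l [i+1, i, i+1] r rfl _, hLnil, hRnil, filterMap_range3]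
    simp only [Nat.add_zero]
    rw [midP0 l r [i+1, i, i+1], midP1 l r (i+1) i (i+1), midP2 l r (i+1) i (i+1),
      midD0 l r (i+1) i (i+1), midD1 l r (i+1) i (i+1), midD2 l r (i+1) i (i+1)]
    rw [g2r hi1 hin _ _, g1r hi1 hin _ _, g0r hi1 hin _ _]
    rw [m0]
    simp [haA, hbA, hcA]
  · rw [iw_split l [i, i+1, i] r rfl _]
    have hLnil' : ((List.range l.length).filterMap fun k =>
        G n ({(l.map (adjT n)).prod ⟨i - 1, by omega⟩, (l.map (adjT n)).prod ⟨i, by omega⟩, (l.map (adjT n)).prod ⟨i + 1, hin⟩} : Finset (Fin n)) (prefixPerm n (l ++ [i, i+1, i] ++ r) k) (((l ++ [i, i+1, i] ++ r)).getD k 0)) = [] := by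
      apply List.filterMap_eq_nil_iff.mpr
      intro k hk
      have hk' := List.mem_range.mp hk
      rw [ML1 l r _ k hk'.le, ML2 l r _ k hk',
        ← ML1 l r [i+1, i, i+1] k hk'.le, ← ML2 l r [i+1, i, i+1] k hk']
      exact hout k (Or.inl hk')
    have hRnil' : ((List.range r.length).filterMap fun t =>
        G n ({(l.map (adjT n)).prod ⟨i - 1, by omega⟩, (l.map (adjT n)).prod ⟨i, by omega⟩, (l.map (adjT n)).prod ⟨i + 1, hin⟩} : Finset (Fin n)) (prefixPerm n (l ++ [i, i+1, i] ++ r) (l.length + (3 + t)))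
          (((l ++ [i, i+1, i] ++ r)).getD (l.length + (3 + t)) 0)) = [] := by
      apply List.filterMap_eq_nil_iff.mpr
      intro t ht
      have ht' := List.mem_range.mp ht
      rw [rightP l r i (i+1) i t, rightD l r i (i+1) i t,
        ← braid_prod hi1 hin, ← rightP l r (i+1) i (i+1) t, ← rightD l r (i+1) i (i+1) t]
      exact hout (l.length + (3 + t)) (Or.inr ⟨by omega, by rw [hlenρ]; omega⟩)
    rw [hLnil', hRnil', filterMap_range3]
    simp only [Nat.add_zero]
    rw [midP0 l r [i, i+1, i], midP1 l r i (i+1) i, midP2 l r i (i+1) i,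
      midD0 l r i (i+1) i, midD1 l r i (i+1) i, midD2 l r i (i+1) i]
    rw [g2s hi1 hin _ _, g1s hi1 hin _ _, g0s hi1 hin _ _]
    rw [m0]
    simp [haA, hbA, hcA]

end Braid212

/-- A downward long braid move decreases the number of
`(2,1,2)`-subnetworks by exactly 1. -/
theorem downward_move_decreases_count212
    (n : ℕ) (w : Equiv.Perm (Fin n)) (l r : List ℕ) (i : ℕ)
    (h : IsReducedDecomp n w (l ++ [i + 1, i, i + 1] ++ r)) :
    count212 n (l ++ [i, i + 1, i] ++ r) + 1 =
      count212 n (l ++ [i + 1, i, i + 1] ++ r) := by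
  classical
  have hi1 : 1 ≤ i := (h.1 i (by simp)).1
  have hin : i + 1 < n := (h.1 (i+1) (by simp)).2
  obtain ⟨hiw1, hiw2⟩ := Braid212.main_special w l r hi1 hin h
  set A0 : Finset (Fin n) := {(l.map (adjT n)).prod ⟨i - 1, by omega⟩, (l.map (adjT n)).prod ⟨i, by omega⟩,
    (l.map (adjT n)).prod ⟨i + 1, hin⟩} with hA0
  have hinj := ((l.map (adjT n)).prod : Equiv.Perm (Fin n)).injective
  have hab : ((l.map (adjT n)).prod : Equiv.Perm (Fin n)) ⟨i - 1, by omega⟩ ≠ (l.map (adjT n)).prod ⟨i, by omega⟩ := by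
    intro hc; have h2 := hinj hc; rw [Fin.mk.injEq] at h2; omega
  have hac : ((l.map (adjT n)).prod : Equiv.Perm (Fin n)) ⟨i - 1, by omega⟩ ≠ (l.map (adjT n)).prod ⟨i + 1, hin⟩ := by
    intro hc; have h2 := hinj hc; rw [Fin.mk.injEq] at h2; omega
  have hbc : ((l.map (adjT n)).prod : Equiv.Perm (Fin n)) ⟨i, by omega⟩ ≠ (l.map (adjT n)).prod ⟨i + 1, hin⟩ := by
    intro hc; have h2 := hinj hc; rw [Fin.mk.injEq] at h2; omega
  have hcard : A0.card = 3 := by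
    rw [hA0, Finset.card_insert_of_notMem (by simp [hab, hac]),
      Finset.card_insert_of_notMem (by simp [hbc]), Finset.card_singleton]
  have hkey : (Finset.univ.filter fun A : Finset (Fin n) =>
        A.card = 3 ∧ inducedWord n (l ++ [i, i + 1, i] ++ r) A = [2, 1, 2])
      = (Finset.univ.filter fun A : Finset (Fin n) =>
        A.card = 3 ∧ inducedWord n (l ++ [i + 1, i, i + 1] ++ r) A = [2, 1, 2]).erase A0 := by
    ext A
    simp only [Finset.mem_erase, Finset.mem_filter, Finset.mem_univ, true_and]
    constructor
    · rintro ⟨hAc, hAiw⟩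
      have hne : A ≠ A0 := by
        rintro rfl
        rw [hiw2] at hAiw
        simp at hAiw
      have hnall : ¬(((l.map (adjT n)).prod : Equiv.Perm (Fin n)) ⟨i - 1, by omega⟩ ∈ A
          ∧ ((l.map (adjT n)).prod : Equiv.Perm (Fin n)) ⟨i, by omega⟩ ∈ A
          ∧ ((l.map (adjT n)).prod : Equiv.Perm (Fin n)) ⟨i + 1, hin⟩ ∈ A) := by
        rintro ⟨h1, h2, h3⟩
        apply hne
        refine (Finset.eq_of_subset_of_card_le ?_ ?_).symm
        · rw [hA0]
          intro x hx
          simp only [Finset.mem_insert, Finset.mem_singleton] at hx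
          rcases hx with rfl | rfl | rfl <;> assumption
        · rw [hAc, hcard]
      exact ⟨hne, hAc, by rw [Braid212.main_iw_eq l r hi1 hin A hnall]; exact hAiw⟩
    · rintro ⟨hne, hAc, hAiw⟩
      refine ⟨hAc, ?_⟩
      have hnall : ¬(((l.map (adjT n)).prod : Equiv.Perm (Fin n)) ⟨i - 1, by omega⟩ ∈ A
          ∧ ((l.map (adjT n)).prod : Equiv.Perm (Fin n)) ⟨i, by omega⟩ ∈ A
          ∧ ((l.map (adjT n)).prod : Equiv.Perm (Fin n)) ⟨i + 1, hin⟩ ∈ A) := by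
        rintro ⟨h1, h2, h3⟩
        apply hne
        refine (Finset.eq_of_subset_of_card_le ?_ ?_).symm
        · rw [hA0]
          intro x hx
          simp only [Finset.mem_insert, Finset.mem_singleton] at hx
          rcases hx with rfl | rfl | rfl <;> assumption
        · rw [hAc, hcard]
      rw [← Braid212.main_iw_eq l r hi1 hin A hnall]
      exact hAiw
  have hmem : A0 ∈ Finset.univ.filter (fun A : Finset (Fin n) =>
      A.card = 3 ∧ inducedWord n (l ++ [i + 1, i, i + 1] ++ r) A = [2, 1, 2]) := by
    simp only [Finset.mem_filter, Finset.mem_univ, true_and]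
    exact ⟨hcard, hiw1⟩
  unfold count212
  rw [hkey, Finset.card_erase_add_one hmem]
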